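/- There is a constant c > 0 such that for every integer n ≥ 2, every integer 1 ≤ i ≤ n, and every pheromone vector τ with Σ_k τ_k ≥ (n−i)(1−1/n) + i/n: under the sampling distribution P_τ, the probability that the sampled bit string contains at least n−i+1 ones is at least c·i/n. (When i ones are still missing and the pheromone sum is at least v(a_{n−i}), the probability of sampling a strictly better OneMax solution is Ω(i/n).) -/

import Mathlib

/-- `prob τ S` is the probability of the event `S` under the product Bernoulli
distribution in which bit `j` equals 1 with probability `τ j`. -/
noncomputable def prob {n : ℕ} (τ : Fin n → ℝ) (S : Finset (Fin n → Bool)) : ℝ :=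
  ∑ x ∈ S, ∏ j, (if x j then τ j else 1 - τ j)

open Finset

set_option maxHeartbeats 2000000

namespace Stmt14
variable {n : ℕ}

lemma sum_prod_bool (g : Fin n → Bool → ℝ) :
    ∑ x : Fin n → Bool, ∏ j, g j (x j) = ∏ j, (g j true + g j false) := by
  rw [← Fintype.prod_sum g]
  exact Fintype.prod_congr _ _ fun j => Fintype.sum_bool _

variable (τ : Fin n → ℝ)

noncomputable def w (x : Fin n → Bool) : ℝ := ∏ j, (if x j then τ j else 1 - τ j)

noncomputable def E (f : (Fin n → Bool) → ℝ) : ℝ := ∑ x, w τ x * f x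

noncomputable def Ek (k : Fin n) (f : Bool → ℝ) : ℝ := τ k * f true + (1 - τ k) * f false

noncomputable def d (j : Fin n) (b : Bool) : ℝ := if b then 1 - τ j else - τ j
noncomputable def v (j : Fin n) : ℝ := τ j * (1 - τ j)
noncomputable def Ds (s : Finset (Fin n)) (x : Fin n → Bool) : ℝ := ∑ j ∈ s, d τ j (x j)

lemma w_nonneg' (h : ∀ j, 0 ≤ τ j ∧ τ j ≤ 1) (x : Fin n → Bool) : 0 ≤ w τ x := by
  refine prod_nonneg fun j _ => ?_
  rcases hx : (x j) with _ | _ <;> simp [hx, (h j).1, (h j).2]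

lemma mass_one' : E τ (fun _ => 1) = 1 := by
  unfold E w
  simp only [mul_one]
  refine (sum_prod_bool (fun j b => if b then τ j else 1 - τ j)).trans ?_
  simp

lemma split_k (k : Fin n) (φ : (Fin n → Bool) → ℝ) :
    ∑ x, φ x = ∑ x ∈ univ.filter (fun x => x k = true), (φ x + φ (Function.update x k false)) := by
  rw [← sum_filter_add_sum_filter_not univ (fun x => x k = true) φ, sum_add_distrib]
  congr 1
  refine sum_nbij' (fun x => Function.update x k true) (fun x => Function.update x k false)
    ?_ ?_ ?_ ?_ ?_
  · intro a ha; simp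
  · intro a ha; simp
  · intro a ha
    simp only [mem_filter, mem_univ, true_and, Bool.not_eq_true] at ha
    funext j
    by_cases hj : j = k
    · subst hj; simp [ha]
    · simp [Function.update_of_ne hj]
  · intro a ha
    simp only [mem_filter, mem_univ, true_and] at ha
    funext j
    by_cases hj : j = k
    · subst hj; simp [ha]
    · simp [Function.update_of_ne hj]
  · intro a ha
    simp only [mem_filter, mem_univ, true_and, Bool.not_eq_true] at ha
    congr 1
    funext j
    by_cases hj : j = k
    · subst hj; simp [ha]
    · simp [Function.update_of_ne hj]

noncomputable def Wr (k : Fin n) (x : Fin n → Bool) : ℝ :=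
  ∏ j ∈ univ.erase k, (if x j then τ j else 1 - τ j)

lemma w_eq (k : Fin n) (x : Fin n → Bool) :
    w τ x = (if x k then τ k else 1 - τ k) * Wr τ k x :=
  (mul_prod_erase univ _ (mem_univ k)).symm

lemma Wr_update (k : Fin n) (x : Fin n → Bool) (b : Bool) :
    Wr τ k (Function.update x k b) = Wr τ k x := by
  refine prod_congr rfl fun j hj => ?_
  rw [Function.update_of_ne (mem_erase.1 hj).1]

lemma E_eq_T (k : Fin n) (g : Bool → ℝ) (F : (Fin n → Bool) → ℝ)
    (hF : ∀ x b, F (Function.update x k b) = F x) :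
    E τ (fun x => g (x k) * F x)
      = Ek τ k g * ∑ x ∈ univ.filter (fun x => x k = true), Wr τ k x * F x := by
  unfold E Ek
  rw [split_k k, mul_sum]
  refine sum_congr rfl fun x hx => ?_
  simp only [mem_filter, mem_univ, true_and] at hx
  rw [w_eq τ k x, w_eq τ k (Function.update x k false)]
  simp only [Wr_update, hF, Function.update_self, hx, if_true, Bool.false_eq_true, if_false]
  ring

lemma factor_coord' (k : Fin n) (f : Bool → ℝ) (F : (Fin n → Bool) → ℝ)
    (hF : ∀ x b, F (Function.update x k b) = F x) :
    E τ (fun x => f (x k) * F x) = Ek τ k f * E τ F := by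
  rw [E_eq_T τ k f F hF]
  have h2 := E_eq_T τ k (fun _ => 1) F hF
  have e1 : E τ (fun x => (fun (_ : Bool) => (1:ℝ)) (x k) * F x) = E τ F := by
    unfold E; simp
  have e2 : Ek τ k (fun (_ : Bool) => (1:ℝ)) = 1 := by unfold Ek; ring
  rw [e1, e2, one_mul] at h2
  rw [h2]

lemma E_add (f g : (Fin n → Bool) → ℝ) :
    E τ (fun x => f x + g x) = E τ f + E τ g := by
  unfold E; rw [← sum_add_distrib]; exact sum_congr rfl fun x _ => by ring

lemma E_const_mul (c : ℝ) (f : (Fin n → Bool) → ℝ) :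
    E τ (fun x => c * f x) = c * E τ f := by
  unfold E; rw [mul_sum]; exact sum_congr rfl fun x _ => by ring

lemma Ds_update {s : Finset (Fin n)} {k : Fin n} (hk : k ∉ s) (x : Fin n → Bool) (b : Bool) :
    Ds τ s (Function.update x k b) = Ds τ s x := by
  refine sum_congr rfl fun j hj => ?_
  rw [Function.update_of_ne (fun h : j = k => hk (by rwa [← h]))]

lemma Ek_d (k : Fin n) : Ek τ k (fun b => d τ k b) = 0 := by
  unfold Ek d; simp; ring

lemma Ek_d2 (k : Fin n) : Ek τ k (fun b => (d τ k b)^2) = v τ k := by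
  unfold Ek d v; simp; ring

lemma Ek_d4_le (k : Fin n) (h0 : 0 ≤ τ k) (h1 : τ k ≤ 1) :
    Ek τ k (fun b => (d τ k b)^4) ≤ v τ k := by
  unfold Ek d v; simp
  nlinarith [sq_nonneg (τ k), sq_nonneg (1 - τ k), mul_nonneg h0 (sub_nonneg.2 h1)]

lemma E_dpow_mul_Dspow (s : Finset (Fin n)) (k : Fin n) (hk : k ∉ s) (a b : ℕ) :
    E τ (fun x => (d τ k (x k))^a * (Ds τ s x)^b)
      = Ek τ k (fun c => (d τ k c)^a) * E τ (fun x => (Ds τ s x)^b) :=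
  factor_coord' τ k (fun c => (d τ k c)^a) (fun x => (Ds τ s x)^b)
    (fun x c => by simp only [Ds_update τ hk])

lemma moments' (hτ : ∀ j, 0 ≤ τ j ∧ τ j ≤ 1) (s : Finset (Fin n)) :
    E τ (fun x => Ds τ s x) = 0 ∧
    E τ (fun x => (Ds τ s x)^2) = ∑ j ∈ s, v τ j ∧
    E τ (fun x => (Ds τ s x)^4) ≤ 3 * (∑ j ∈ s, v τ j)^2 + ∑ j ∈ s, v τ j := by
  induction s using Finset.induction_on with
  | empty =>
      refine ⟨?_, ?_, ?_⟩ <;> · unfold E Ds; simp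
  | @insert k s hk ih =>
      obtain ⟨ih1, ih2, ih4⟩ := ih
      have hDs : ∀ x, Ds τ (insert k s) x = d τ k (x k) + Ds τ s x :=
        fun x => sum_insert hk
      have hV : ∑ j ∈ insert k s, v τ j = v τ k + ∑ j ∈ s, v τ j := sum_insert hk
      have hv0 : 0 ≤ v τ k := mul_nonneg (hτ k).1 (sub_nonneg.2 (hτ k).2)
      have hV0 : 0 ≤ ∑ j ∈ s, v τ j :=
        sum_nonneg fun j _ => mul_nonneg (hτ j).1 (sub_nonneg.2 (hτ j).2)
      constructor
      · have e : (fun x => Ds τ (insert k s) x)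
            = fun x => ((d τ k (x k))^1 * (Ds τ s x)^0) + Ds τ s x := by
          funext x; rw [hDs]; ring
        rw [e, E_add, E_dpow_mul_Dspow τ s k hk 1 0, ih1]
        have : Ek τ k (fun c => (d τ k c)^1) = 0 := by
          rw [show (fun c => (d τ k c)^1) = fun c => d τ k c by funext c; ring, Ek_d]
        rw [this]; ring
      constructor
      · have e : (fun x => (Ds τ (insert k s) x)^2)
            = fun x => ((d τ k (x k))^2 * (Ds τ s x)^0)
              + (2 * ((d τ k (x k))^1 * (Ds τ s x)^1) + (Ds τ s x)^2) := by
          funext x; rw [hDs]; ring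
        rw [e, E_add, E_add, E_const_mul, E_dpow_mul_Dspow τ s k hk 2 0,
          E_dpow_mul_Dspow τ s k hk 1 1, ih2, hV]
        have e0 : E τ (fun x => (Ds τ s x)^0) = 1 := by
          rw [show (fun x : Fin n → Bool => (Ds τ s x)^0) = fun _ => 1 by funext x; ring]
          exact mass_one' τ
        have e1 : E τ (fun x => (Ds τ s x)^1) = 0 := by
          rw [show (fun x => (Ds τ s x)^1) = fun x => Ds τ s x by funext x; ring]
          exact ih1
        have e2 : Ek τ k (fun c => (d τ k c)^2) = v τ k := Ek_d2 τ k
        rw [e0, e1, e2]; ring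
      · have e : (fun x => (Ds τ (insert k s) x)^4)
            = fun x => ((d τ k (x k))^4 * (Ds τ s x)^0)
              + (4 * ((d τ k (x k))^3 * (Ds τ s x)^1)
              + (6 * ((d τ k (x k))^2 * (Ds τ s x)^2)
              + (4 * ((d τ k (x k))^1 * (Ds τ s x)^3)
              + (Ds τ s x)^4))) := by
          funext x; rw [hDs]; ring
        rw [e, E_add, E_add, E_add, E_add, E_const_mul, E_const_mul, E_const_mul,
          E_dpow_mul_Dspow τ s k hk 4 0, E_dpow_mul_Dspow τ s k hk 3 1,
          E_dpow_mul_Dspow τ s k hk 2 2, E_dpow_mul_Dspow τ s k hk 1 3, hV]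
        have e0 : E τ (fun x => (Ds τ s x)^0) = 1 := by
          rw [show (fun x : Fin n → Bool => (Ds τ s x)^0) = fun _ => 1 by funext x; ring]
          exact mass_one' τ
        have e1 : E τ (fun x => (Ds τ s x)^1) = 0 := by
          rw [show (fun x => (Ds τ s x)^1) = fun x => Ds τ s x by funext x; ring]
          exact ih1
        have ed1 : Ek τ k (fun c => (d τ k c)^1) = 0 := by
          rw [show (fun c => (d τ k c)^1) = fun c => d τ k c by funext c; ring, Ek_d]
        rw [e0, e1, ed1, Ek_d2]
        have h4 := Ek_d4_le τ k (hτ k).1 (hτ k).2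
        nlinarith [ih4, h4, hv0, hV0, sq_nonneg (v τ k)]

lemma wCS' (h : ∀ j, 0 ≤ τ j ∧ τ j ≤ 1) (A : Finset (Fin n → Bool)) (f g : (Fin n → Bool) → ℝ) :
    (∑ x ∈ A, w τ x * (f x * g x))^2
      ≤ (∑ x ∈ A, w τ x * (f x)^2) * (∑ x ∈ A, w τ x * (g x)^2) := by
  have H := sum_mul_sq_le_sq_mul_sq A (fun x => Real.sqrt (w τ x) * f x)
    (fun x => Real.sqrt (w τ x) * g x)
  try simp only [] at H
  have s1 : ∑ x ∈ A, (Real.sqrt (w τ x) * f x) * (Real.sqrt (w τ x) * g x)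
      = ∑ x ∈ A, w τ x * (f x * g x) := by
    refine sum_congr rfl fun x _ => ?_
    rw [show (Real.sqrt (w τ x) * f x) * (Real.sqrt (w τ x) * g x)
        = (Real.sqrt (w τ x) * Real.sqrt (w τ x)) * (f x * g x) by ring,
      Real.mul_self_sqrt (w_nonneg' τ h x)]
  have s2 : ∑ x ∈ A, (Real.sqrt (w τ x) * f x)^2 = ∑ x ∈ A, w τ x * (f x)^2 := by
    refine sum_congr rfl fun x _ => ?_
    rw [mul_pow, Real.sq_sqrt (w_nonneg' τ h x)]
  have s3 : ∑ x ∈ A, (Real.sqrt (w τ x) * g x)^2 = ∑ x ∈ A, w τ x * (g x)^2 := by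
    refine sum_congr rfl fun x _ => ?_
    rw [mul_pow, Real.sq_sqrt (w_nonneg' τ h x)]
  rwa [s1, s2, s3] at H

lemma abs_moment' (h : ∀ j, 0 ≤ τ j ∧ τ j ≤ 1) (hV : (1:ℝ)/2 ≤ ∑ j, v τ j) :
    Real.sqrt (∑ j, v τ j) * (2/5) ≤ E τ (fun x => |Ds τ univ x|) := by
  obtain ⟨m1, m2, m4⟩ := moments' τ h univ
  set V := ∑ j, v τ j with hVdef
  have hV0 : (0:ℝ) < V := lt_of_lt_of_le (by norm_num) hV
  have h4 : E τ (fun x => (Ds τ univ x)^4) ≤ 5 * V^2 := by nlinarith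
  set a := E τ (fun x => |Ds τ univ x|) with ha
  set b := E τ (fun x => |Ds τ univ x|^3) with hb
  have ha0 : 0 ≤ a := sum_nonneg fun x _ => mul_nonneg (w_nonneg' τ h x) (abs_nonneg _)
  have hb0 : 0 ≤ b := sum_nonneg fun x _ => mul_nonneg (w_nonneg' τ h x) (by positivity)
  have cs1 : V^2 ≤ a * b := by
    have H := wCS' τ h univ (fun x => Real.sqrt |Ds τ univ x|)
      (fun x => |Ds τ univ x| * Real.sqrt |Ds τ univ x|)
    have s1 : ∑ x, w τ x * (Real.sqrt |Ds τ univ x| * (|Ds τ univ x| * Real.sqrt |Ds τ univ x|))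
        = ∑ x, w τ x * (Ds τ univ x)^2 := by
      refine sum_congr rfl fun x _ => ?_
      rw [show Real.sqrt |Ds τ univ x| * (|Ds τ univ x| * Real.sqrt |Ds τ univ x|)
          = (Real.sqrt |Ds τ univ x| * Real.sqrt |Ds τ univ x|) * |Ds τ univ x| by ring,
        Real.mul_self_sqrt (abs_nonneg _), ← sq_abs]
      ring
    have s2 : ∑ x, w τ x * (Real.sqrt |Ds τ univ x|)^2 = a := by
      rw [ha]; refine sum_congr rfl fun x _ => ?_
      rw [Real.sq_sqrt (abs_nonneg _)]
    have s3 : ∑ x, w τ x * (|Ds τ univ x| * Real.sqrt |Ds τ univ x|)^2 = b := by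
      rw [hb]; refine sum_congr rfl fun x _ => ?_
      rw [show (|Ds τ univ x| * Real.sqrt |Ds τ univ x|)^2
          = (Real.sqrt |Ds τ univ x| * Real.sqrt |Ds τ univ x|) * |Ds τ univ x|^2 by ring,
        Real.mul_self_sqrt (abs_nonneg _),
        show |Ds τ univ x| * |Ds τ univ x|^2 = |Ds τ univ x|^3 by ring]
    rw [s1, s2, s3] at H
    have : ∑ x, w τ x * (Ds τ univ x)^2 = V := m2
    rw [this] at H
    nlinarith [H]
  have cs2 : b^2 ≤ V * (5 * V^2) := by
    have H := wCS' τ h univ (fun x => |Ds τ univ x|) (fun x => (Ds τ univ x)^2)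
    have s1 : ∑ x, w τ x * (|Ds τ univ x| * (Ds τ univ x)^2) = b := by
      rw [hb]; refine sum_congr rfl fun x _ => ?_
      rw [← sq_abs]; ring_nf
    have s2 : ∑ x, w τ x * (|Ds τ univ x|)^2 = V := by
      rw [← m2]; refine sum_congr rfl fun x _ => ?_; rw [sq_abs]
    have s3 : ∑ x, w τ x * ((Ds τ univ x)^2)^2 = ∑ x, w τ x * (Ds τ univ x)^4 := by
      refine sum_congr rfl fun x _ => ?_; ring_nf
    rw [s1, s2, s3] at H
    have h4' : ∑ x, w τ x * (Ds τ univ x)^4 ≤ 5 * V^2 := h4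
    nlinarith [H, h4', sq_nonneg b]
  -- combine: V^4 ≤ (ab)^2 ≤ a^2 b^2 ≤ a^2 * 5V^3 ⇒ V/5 ≤ a^2
  have key : V / 5 ≤ a^2 := by
    have h1 : (V^2)^2 ≤ (a*b)^2 := by
      have := mul_self_le_mul_self (sq_nonneg V) cs1
      nlinarith [this]
    have h2 : (a*b)^2 ≤ a^2 * (V * (5 * V^2)) := by
      have := mul_le_mul_of_nonneg_left cs2 (sq_nonneg a)
      nlinarith [this]
    have h3 : V^4 ≤ a^2 * (5 * V^3) := by nlinarith [h1, h2]
    have hV3 : (0:ℝ) < V^3 := by positivity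
    rw [div_le_iff₀ (by norm_num : (0:ℝ) < 5)] at *
    nlinarith [h3, hV3, mul_pos hV3 (by norm_num : (0:ℝ) < 5)]
  -- conclude sqrt V * 2/5 ≤ a
  have t0 : 0 ≤ Real.sqrt V * (2/5) := by positivity
  have tsq : (Real.sqrt V * (2/5))^2 ≤ a^2 := by
    rw [mul_pow, Real.sq_sqrt hV0.le]
    nlinarith [key, hV0]
  calc Real.sqrt V * (2/5) = Real.sqrt ((Real.sqrt V * (2/5))^2) := (Real.sqrt_sq t0).symm
    _ ≤ Real.sqrt (a^2) := Real.sqrt_le_sqrt tsq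
    _ = a := Real.sqrt_sq ha0

lemma tail_bound (h : ∀ j, 0 ≤ τ j ∧ τ j ≤ 1) (hV : (1:ℝ)/2 ≤ ∑ j, v τ j) :
    (1:ℝ)/100 ≤ ∑ x ∈ univ.filter
      (fun x => Real.sqrt (∑ j, v τ j) / 10 ≤ Ds τ univ x), w τ x := by
  obtain ⟨m1, m2, _⟩ := moments' τ h univ
  set V := ∑ j, v τ j with hVdef
  set σ := Real.sqrt V with hσ
  have hV0 : (0:ℝ) < V := lt_of_lt_of_le (by norm_num) hV
  have hσ0 : 0 < σ := Real.sqrt_pos.2 hV0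
  have hσsq : σ^2 = V := Real.sq_sqrt hV0.le
  set A := univ.filter (fun x => σ / 10 ≤ Ds τ univ x) with hA
  set S := ∑ x ∈ A, w τ x * Ds τ univ x with hS
  set P := ∑ x ∈ A, w τ x with hP
  -- E D⁺ = E|D|/2
  have pos_part : E τ (fun x => (|Ds τ univ x| + Ds τ univ x)/2)
      = E τ (fun x => |Ds τ univ x|) / 2 := by
    unfold E
    rw [sum_congr rfl (fun (x : Fin n → Bool) _ =>
      show w τ x * ((|Ds τ univ x| + Ds τ univ x)/2)
        = (w τ x * |Ds τ univ x| + w τ x * Ds τ univ x)/2 by ring)]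
    rw [← sum_div, sum_add_distrib]
    have : ∑ x : Fin n → Bool, w τ x * Ds τ univ x = 0 := m1
    rw [this, add_zero]
  -- pointwise bound : (|D|+D)/2 ≤ σ/10 + ite
  have ptwise : ∀ x : Fin n → Bool, (|Ds τ univ x| + Ds τ univ x)/2
      ≤ σ/10 + (if σ/10 ≤ Ds τ univ x then Ds τ univ x else 0) := by
    intro x
    rcases le_or_gt (σ/10) (Ds τ univ x) with hc | hc
    · rw [if_pos hc]
      rcases le_or_gt 0 (Ds τ univ x) with h0 | h0
      · rw [abs_of_nonneg h0]; linarith [hσ0]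
      · rw [abs_of_neg h0]; linarith [hσ0]
    · rw [if_neg (not_le.2 hc)]
      rcases le_or_gt 0 (Ds τ univ x) with h0 | h0
      · rw [abs_of_nonneg h0]; linarith
      · rw [abs_of_neg h0]; linarith [hσ0]
  -- E of RHS = σ/10 + S
  have Erhs : E τ (fun x => σ/10 + (if σ/10 ≤ Ds τ univ x then Ds τ univ x else 0))
      = σ/10 + S := by
    unfold E
    rw [sum_congr rfl (fun (x : Fin n → Bool) _ =>
      show w τ x * (σ/10 + (if σ/10 ≤ Ds τ univ x then Ds τ univ x else 0))
        = w τ x * σ/10 + (if σ/10 ≤ Ds τ univ x then w τ x * Ds τ univ x else 0) by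
          rcases le_or_gt (σ/10) (Ds τ univ x) with hc | hc
          · rw [if_pos hc, if_pos hc]; ring
          · rw [if_neg (not_le.2 hc), if_neg (not_le.2 hc)]; ring)]
    rw [sum_add_distrib, sum_ite, sum_const_zero, add_zero]
    have hmass : ∑ x : Fin n → Bool, w τ x = 1 := by
      have := mass_one' τ; unfold E at this; simpa using this
    rw [← sum_div, ← sum_mul, hmass, one_mul]
  have mono : E τ (fun x => (|Ds τ univ x| + Ds τ univ x)/2)
      ≤ E τ (fun x => σ/10 + (if σ/10 ≤ Ds τ univ x then Ds τ univ x else 0)) := by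
    unfold E
    exact sum_le_sum fun x _ => mul_le_mul_of_nonneg_left (ptwise x) (w_nonneg' τ h x)
  have habs := abs_moment' τ h hV
  have hS10 : σ/10 ≤ S := by
    rw [pos_part] at mono
    rw [Erhs] at mono
    have : σ * (2/5) / 2 ≤ σ/10 + S := le_trans (by linarith [habs]) mono
    linarith
  -- CS: S^2 ≤ V * P
  have hcs : S^2 ≤ V * P := by
    have H := wCS' τ h A (fun x => Ds τ univ x) (fun x => 1)
    have s1 : ∑ x ∈ A, w τ x * (Ds τ univ x * 1) = S := by
      rw [hS]; exact sum_congr rfl fun x _ => by ring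
    have s2 : ∑ x ∈ A, w τ x * (1:ℝ)^2 = P := by
      rw [hP]; exact sum_congr rfl fun x _ => by ring
    rw [s1, s2] at H
    refine le_trans H (mul_le_mul_of_nonneg_right ?_ ?_)
    · have sub : A ⊆ univ := subset_univ A
      have : ∑ x ∈ A, w τ x * (Ds τ univ x)^2 ≤ ∑ x : Fin n → Bool, w τ x * (Ds τ univ x)^2 :=
        sum_le_sum_of_subset_of_nonneg sub fun x _ _ =>
          mul_nonneg (w_nonneg' τ h x) (sq_nonneg _)
      rw [show (∑ x : Fin n → Bool, w τ x * (Ds τ univ x)^2) = V from m2] at this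
      exact this
    · rw [hP]; exact sum_nonneg fun x _ => w_nonneg' τ h x
  -- conclude
  have hSsq : (σ/10)^2 ≤ S^2 := by
    have h0 : 0 ≤ σ/10 := by positivity
    exact pow_le_pow_left₀ h0 hS10 2
  have : σ^2/100 ≤ V * P := by
    calc σ^2/100 = (σ/10)^2 := by ring
      _ ≤ S^2 := hSsq
      _ ≤ V * P := hcs
  rw [hσsq] at this
  have : V * (1/100) ≤ V * P := by linarith
  exact le_of_mul_le_mul_left (by linarith [this]) hV0

lemma exp_le_one_sub {q : ℝ} (h0 : 0 ≤ q) (h1 : q ≤ 1/2) : Real.exp (-(2*q)) ≤ 1 - q := by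
  have h2 : 1 + 2*q ≤ Real.exp (2*q) := by
    have := Real.add_one_le_exp (2*q); linarith
  have h3 : 0 < 1 + 2*q := by linarith
  have h4 : Real.exp (-(2*q)) = 1 / Real.exp (2*q) := by
    rw [Real.exp_neg]; ring
  rw [h4]
  have h5 : 1 / Real.exp (2*q) ≤ 1 / (1 + 2*q) := by
    apply one_div_le_one_div_of_le h3 h2
  refine le_trans h5 ?_
  rw [div_le_iff₀ h3]
  nlinarith

lemma prod_ge_exp' {ι : Type*} (s : Finset ι) (p : ι → ℝ)
    (h : ∀ k ∈ s, 0 ≤ p k ∧ p k ≤ 1/2) :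
    Real.exp (-(2 * ∑ k ∈ s, p k)) ≤ ∏ k ∈ s, (1 - p k) := by
  have : Real.exp (-(2 * ∑ k ∈ s, p k)) = ∏ k ∈ s, Real.exp (-(2 * p k)) := by
    rw [← Real.exp_sum]
    congr 1
    rw [mul_sum]
    exact neg_eq_iff_eq_neg.mpr (by rw [← sum_neg_distrib]; simp)
  rw [this]
  refine prod_le_prod (fun k _ => (Real.exp_pos _).le) fun k hk => ?_
  exact exp_le_one_sub (h k hk).1 (h k hk).2

-- extraction of a chunk with sum in [1/4, 3/4]
lemma extract_chunk {ι : Type*} [DecidableEq ι] :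
    ∀ (B : Finset ι) (p : ι → ℝ), (∀ k ∈ B, 0 ≤ p k ∧ p k ≤ 1/2) →
    (1/4 : ℝ) ≤ ∑ k ∈ B, p k →
    ∃ G ⊆ B, (1/4 : ℝ) ≤ ∑ k ∈ G, p k ∧ ∑ k ∈ G, p k ≤ 3/4 := by
  intro B
  induction B using Finset.strongInduction with
  | _ B ih =>
    intro p hp hsum
    have hne : B.Nonempty := by
      rcases B.eq_empty_or_nonempty with rfl | hne
      · simp at hsum; norm_num at hsum
      · exact hne
    obtain ⟨x, hx⟩ := hne
    rcases le_or_gt (1/4 : ℝ) (p x) with hbig | hsmall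
    · exact ⟨{x}, singleton_subset_iff.2 hx, by
        simp only [sum_singleton]; exact hbig, by
        simp only [sum_singleton]; linarith [(hp x hx).2]⟩
    · rcases le_or_gt (1/4 : ℝ) (∑ k ∈ B.erase x, p k) with hrec | hlow
      · obtain ⟨G, hG1, hG2⟩ := ih (B.erase x) (erase_ssubset hx) p
          (fun k hk => hp k (mem_of_mem_erase hk)) hrec
        exact ⟨G, subset_trans hG1 (erase_subset x B), hG2⟩
      · refine ⟨B, Finset.Subset.refl B, hsum, ?_⟩
        have : ∑ k ∈ B, p k = p x + ∑ k ∈ B.erase x, p k := (add_sum_erase B p hx).symm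
        rw [this]; linarith

lemma grouping' {ι : Type*} [DecidableEq ι] :
    ∀ (h : ℕ) (B : Finset ι) (p : ι → ℝ), (∀ k ∈ B, 0 ≤ p k ∧ p k ≤ 1/2) →
    (3/4 : ℝ) * h - 1/2 ≤ ∑ k ∈ B, p k →
    ∃ G : Fin h → Finset ι, (∀ g, G g ⊆ B) ∧
      (∀ g g', g ≠ g' → Disjoint (G g) (G g')) ∧
      (∀ g, (1/4 : ℝ) ≤ ∑ k ∈ G g, p k) := by
  intro h
  induction h with
  | zero =>
      intro B p hp hsum
      exact ⟨fun g => g.elim0, fun g => g.elim0, fun g => g.elim0, fun g => g.elim0⟩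
  | succ h ih =>
      intro B p hp hsum
      have h1 : (1/4 : ℝ) ≤ ∑ k ∈ B, p k := by
        push_cast at hsum
        nlinarith [Nat.cast_nonneg (α := ℝ) h]
      obtain ⟨G0, hG0B, hG0l, hG0u⟩ := extract_chunk B p hp h1
      have hrest : (3/4 : ℝ) * h - 1/2 ≤ ∑ k ∈ B \ G0, p k := by
        rw [sum_sdiff_eq_sub hG0B]
        push_cast at hsum ⊢
        linarith
      obtain ⟨G', hG'B, hG'disj, hG'l⟩ := ih (B \ G0) p
        (fun k hk => hp k (mem_sdiff.1 hk).1) hrest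
      refine ⟨Fin.cons G0 G', ?_, ?_, ?_⟩
      · intro g
        refine Fin.cases ?_ ?_ g
        · exact hG0B
        · intro g'; exact subset_trans (hG'B g') (sdiff_subset)
      · intro g g' hne
        rcases Fin.eq_zero_or_eq_succ g with rfl | ⟨a, rfl⟩ <;>
          rcases Fin.eq_zero_or_eq_succ g' with rfl | ⟨b, rfl⟩
        · exact absurd rfl hne
        · simp only [Fin.cons_zero, Fin.cons_succ]
          exact Finset.disjoint_left.mpr fun k hk hk' =>
            (mem_sdiff.1 (hG'B b hk')).2 hk
        · simp only [Fin.cons_zero, Fin.cons_succ]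
          exact Finset.disjoint_left.mpr fun k hk hk' =>
            (mem_sdiff.1 (hG'B a hk)).2 hk'
        · simp only [Fin.cons_succ]
          exact hG'disj a b (fun hab => hne (by rw [hab]))
      · intro g
        refine Fin.cases ?_ ?_ g
        · exact hG0l
        · exact hG'l


lemma w_indicator' (T : Finset (Fin n)) :
    w τ (fun j => decide (j ∈ T)) = (∏ j ∈ T, τ j) * ∏ j ∈ Tᶜ, (1 - τ j) := by
  unfold w
  rw [← prod_mul_prod_compl T]
  congr 1
  · exact prod_congr rfl fun j hj => by simp [hj]
  · exact prod_congr rfl fun j hj => by simp [mem_compl.1 hj]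

lemma trues_indicator'' (τ' : Fin n → ℝ) (T : Finset (Fin n)) :
    univ.filter (fun k => (fun j => decide (j ∈ T)) k = true) = T := by
  ext j; simp

lemma combinatorial (hn : 2 ≤ n) (i : ℕ) (hi1 : 1 ≤ i) (hin : i ≤ n)
    (hτ : ∀ k, 1/(n:ℝ) ≤ τ k ∧ τ k ≤ 1 - 1/(n:ℝ))
    (hQ : ∑ k, (1 - τ k) ≤ (i:ℝ) + 1 - 2*i/n)
    (hV400 : ∑ j, v τ j ≤ 400) :
    Real.exp (-6000) * i / n ≤
      ∑ x ∈ univ.filter (fun x : Fin n → Bool =>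
        n - i + 1 ≤ (univ.filter (fun k => x k = true)).card), w τ x := by
  classical
  have hn0 : (0:ℝ) < n := by positivity
  have hn2 : (2:ℝ) ≤ n := by exact_mod_cast hn
  have hτ01 : ∀ k, 0 ≤ τ k ∧ τ k ≤ 1 := fun k =>
    ⟨le_trans (by positivity) (hτ k).1, le_trans (hτ k).2 (by
      have : 0 ≤ 1/(n:ℝ) := by positivity
      linarith)⟩
  set B := univ.filter (fun k => τ k < 1/2) with hB
  set a := B.card with ha
  set m := ∑ k ∈ B, τ k with hm
  set QS := ∑ k ∈ Bᶜ, (1 - τ k) with hQS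
  have hmemB : ∀ k, k ∈ B ↔ τ k < 1/2 := fun k => by rw [hB]; simp
  have hmemBc : ∀ k, k ∈ Bᶜ ↔ ¬ τ k < 1/2 := fun k => by rw [mem_compl, hmemB]
  have han : a ≤ n := by
    rw [ha]
    calc B.card ≤ (univ : Finset (Fin n)).card := card_le_card (subset_univ B)
      _ = n := by simp
  have hm0 : 0 ≤ m := sum_nonneg fun k _ => (hτ01 k).1
  have hQS0 : 0 ≤ QS := sum_nonneg fun k _ => by linarith [(hτ01 k).2]
  have hm800 : m ≤ 800 := by
    have h1 : m ≤ 2 * ∑ j, v τ j := by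
      rw [hm, mul_sum]
      calc ∑ k ∈ B, τ k ≤ ∑ k ∈ B, 2 * v τ k := by
            refine sum_le_sum fun k hk => ?_
            have hk2 := (hmemB k).1 hk
            unfold v
            nlinarith [(hτ01 k).1]
        _ ≤ ∑ k, 2 * v τ k := by
            refine sum_le_sum_of_subset_of_nonneg (subset_univ B) fun k _ _ => ?_
            unfold v
            nlinarith [(hτ01 k).1, (hτ01 k).2]
    linarith
  have hQS800 : QS ≤ 800 := by
    have h1 : QS ≤ 2 * ∑ j, v τ j := by
      rw [hQS, mul_sum]
      calc ∑ k ∈ Bᶜ, (1 - τ k) ≤ ∑ k ∈ Bᶜ, 2 * v τ k := by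
            refine sum_le_sum fun k hk => ?_
            have hk2 := not_lt.1 ((hmemBc k).1 hk)
            unfold v
            nlinarith [(hτ01 k).2]
        _ ≤ ∑ k, 2 * v τ k := by
            refine sum_le_sum_of_subset_of_nonneg (subset_univ Bᶜ) fun k _ _ => ?_
            unfold v
            nlinarith [(hτ01 k).1, (hτ01 k).2]
    linarith
  -- product bounds
  have prodBc : Real.exp (-(2*QS)) ≤ ∏ j ∈ Bᶜ, τ j := by
    have := prod_ge_exp' Bᶜ (fun k => 1 - τ k) (fun k hk => by
      have hk2 := not_lt.1 ((hmemBc k).1 hk)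
      exact ⟨show (0:ℝ) ≤ 1 - τ k by linarith [(hτ01 k).2],
        show (1:ℝ) - τ k ≤ 1/2 by linarith⟩)
    rw [← hQS] at this
    refine le_trans this (le_of_eq (prod_congr rfl fun j _ => by ring))
  have prodBsub : ∀ s : Finset (Fin n), s ⊆ B →
      Real.exp (-(2*m)) ≤ ∏ j ∈ B \ s, (1 - τ j) := by
    intro s hs
    have h1 := prod_ge_exp' (B \ s) τ (fun k hk => by
      have hk2 := (hmemB k).1 (mem_sdiff.1 hk).1
      exact ⟨(hτ01 k).1, le_of_lt hk2⟩)
    refine le_trans (Real.exp_le_exp.2 ?_) h1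
    have : ∑ k ∈ B \ s, τ k ≤ m := by
      rw [hm]
      exact sum_le_sum_of_subset_of_nonneg (sdiff_subset) fun k _ _ => (hτ01 k).1
    linarith
  -- the target event
  set tgt := univ.filter (fun x : Fin n → Bool =>
      n - i + 1 ≤ (univ.filter (fun k => x k = true)).card) with htgt
  have htgt_nonneg : ∀ x ∈ tgt, 0 ≤ w τ x := fun x _ => w_nonneg' τ hτ01 x
  have hin' : (i:ℝ) / n ≤ 1 := by
    rw [div_le_one hn0]; exact_mod_cast hin
  have hni0 : (0:ℝ) < (i:ℝ)/n := by
    have : (0:ℝ) < i := by exact_mod_cast hi1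
    positivity
  rcases lt_or_ge a i with hai | hai
  · -- subcase A : a < i, take the point which is true exactly on Bᶜ
    have hx0mem : (fun j => decide (j ∈ Bᶜ)) ∈ tgt := by
      rw [htgt, mem_filter]
      refine ⟨mem_univ _, ?_⟩
      rw [trues_indicator'' τ Bᶜ, card_compl]
      simp only [Fintype.card_fin]
      omega
    have hw : Real.exp (-(2*QS) + -(2*m)) ≤ w τ (fun j => decide (j ∈ Bᶜ)) := by
      rw [w_indicator' τ Bᶜ, compl_compl, Real.exp_add]
      have h3 := prodBsub ∅ (empty_subset B)
      rw [sdiff_empty] at h3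
      exact mul_le_mul prodBc h3 (Real.exp_pos _).le
        (le_trans (Real.exp_pos _).le prodBc)
    have e1 : Real.exp (-6000) * i / n ≤ Real.exp (-(2*QS) + -(2*m)) := by
      rw [mul_div_assoc]
      calc Real.exp (-6000) * ((i:ℝ)/n) ≤ Real.exp (-6000) * 1 :=
            mul_le_mul_of_nonneg_left hin' (Real.exp_pos _).le
        _ = Real.exp (-6000) := mul_one _
        _ ≤ Real.exp (-(2*QS) + -(2*m)) := Real.exp_le_exp.2 (by linarith)
    exact le_trans (le_trans e1 hw) (single_le_sum htgt_nonneg hx0mem)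
  · -- subcase B : i ≤ a
    have hhcast : ((a - i + 1 : ℕ) : ℝ) = (a:ℝ) - i + 1 := by
      push_cast [Nat.cast_sub hai]
      ring
    have hBne : B.Nonempty := by
      rw [← card_pos, ← ha]; omega
    have hn3 : (3:ℝ) ≤ n := by
      obtain ⟨k, hk⟩ := hBne
      have h1 := (hτ k).1
      have h2 := (hmemB k).1 hk
      have h3 : (1:ℝ)/n < 1/2 := lt_of_le_of_lt h1 h2
      rw [div_lt_div_iff₀ hn0 (by norm_num)] at h3
      have : 2 < n := by exact_mod_cast (by linarith : (2:ℝ) < n)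
      exact_mod_cast (by omega : 3 ≤ n)
    have hsplitB : ∑ k ∈ B, (1 - τ k) = (a:ℝ) - m := by
      rw [sum_sub_distrib, sum_const, ha, nsmul_eq_mul, mul_one]
    have hsplit : ((a:ℝ) - m) + QS = ∑ k, (1 - τ k) := by
      rw [← hsplitB, hQS, sum_add_sum_compl]
    have hQSlow : ((n:ℝ) - a)/n ≤ QS := by
      have h1 : (Bᶜ.card) • ((1:ℝ)/n) ≤ ∑ k ∈ Bᶜ, (1 - τ k) := by
        refine card_nsmul_le_sum Bᶜ _ _ fun k _ => ?_
        linarith [(hτ k).2]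
      rw [card_compl] at h1
      simp only [Fintype.card_fin, nsmul_eq_mul] at h1
      rw [Nat.cast_sub han] at h1
      calc ((n:ℝ) - a)/n = ((n:ℝ) - a) * (1/n) := by ring
        _ ≤ QS := h1
    have hma : ((a:ℝ) - i) + (2*i - a)/n ≤ m := by
      have key : (a:ℝ) - m + ((n:ℝ) - a)/n ≤ i + 1 - 2*i/n := by
        linarith [hQ, hQSlow, hsplit]
      have e1 : ((n:ℝ) - a)/n = 1 - a/n := by field_simp
      have e2 : (2*(i:ℝ) - a)/n = 2*(i/n) - a/n := by ring
      have e3 : 2*(i:ℝ)/n = 2*(i/n) := by ring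
      rw [e1] at key
      rw [e2]
      rw [e3] at key
      linarith
    have ha2i : (a:ℝ) ≤ 2*i := by
      have h1 : (a:ℝ) * (1/2) ≤ (a:ℝ) - m := by
        have h2 : (B.card) • ((1:ℝ)/2) ≤ ∑ k ∈ B, (1 - τ k) := by
          refine card_nsmul_le_sum B _ _ fun k hk => ?_
          linarith [(hmemB k).1 hk]
        rw [hsplitB, nsmul_eq_mul, ← ha] at h2
        exact h2
      have key : (a:ℝ) - m + ((n:ℝ) - a)/n ≤ i + 1 - 2*i/n := by
        linarith [hQ, hQSlow, hsplit]
      -- a/2 + 1 - a/n ≤ i + 1 - 2i/n  ⇒  a(1/2 - 1/n) ≤ i(1 - 2/n) ⇒ a ≤ 2i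
      have e1 : ((n:ℝ) - a)/n = 1 - a/n := by field_simp
      rw [e1] at key
      have h4 : (a:ℝ)/2 - a/n ≤ (i:ℝ) - 2*i/n := by linarith
      have e1 : (a:ℝ)/2 - a/n = a*((n:ℝ)-2)/(2*n) := by field_simp
      have e2 : (i:ℝ) - 2*i/n = i*((n:ℝ)-2)/n := by field_simp
      have h5 : (a:ℝ)*((n:ℝ)-2)/(2*n) ≤ i*((n:ℝ)-2)/n := by rw [← e1, ← e2]; exact h4
      rw [div_le_div_iff₀ (by positivity) hn0] at h5
      by_contra hc
      push_neg at hc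
      have hpos : (0:ℝ) < ((a:ℝ) - 2*i)*((n:ℝ)-2)*n :=
        mul_pos (mul_pos (by linarith) (by linarith)) hn0
      ring_nf at h5 hpos
      linarith [h5, hpos]
    have ha2i' : a ≤ 2*i := by exact_mod_cast ha2i
    have hm1 : ((a:ℝ) - i) ≤ m := by
      have : (0:ℝ) ≤ (2*(i:ℝ) - a)/n := by
        apply div_nonneg _ hn0.le
        linarith
      linarith [hma]
    have hh801 : ((a - i + 1 : ℕ):ℝ) ≤ 801 := by
      rw [hhcast]; linarith [hm1, hm800]
    -- groups with product bound
    obtain ⟨G, hGB, hGdisj, hX⟩ :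
        ∃ G : Fin (a - i + 1) → Finset (Fin n), (∀ g, G g ⊆ B) ∧
          (∀ g g', g ≠ g' → Disjoint (G g) (G g')) ∧
          Real.exp (-2800) * i / n ≤ ∏ g, ∑ k ∈ G g, τ k := by
      rcases Nat.lt_or_ge a (i+1) with hlt | hge2
      · -- a = i
        have hae : a = i := by omega
        refine ⟨fun _ => B, fun _ => Finset.Subset.refl B, ?_, ?_⟩
        · intro g g' hgg
          exfalso
          apply hgg
          apply Fin.ext
          have g1 := g.isLt
          have g2 := g'.isLt
          omega
        · rw [prod_const, card_univ, Fintype.card_fin,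
            show a - i + 1 = 1 by omega, pow_one]
          have hca : (a:ℝ) = i := by exact_mod_cast hae
          rw [hca] at hma
          have him : (i:ℝ)/n ≤ m := by
            have e : ((i:ℝ) - i) + (2*(i:ℝ) - i)/n = i/n := by ring
            linarith [hma, e]
          calc Real.exp (-2800) * i / n = Real.exp (-2800) * ((i:ℝ)/n) := by ring
            _ ≤ 1 * ((i:ℝ)/n) := mul_le_mul_of_nonneg_right
                (Real.exp_le_one_iff.2 (by norm_num)) hni0.le
            _ = (i:ℝ)/n := one_mul _
            _ ≤ m := him
      · -- h ≥ 2
        have hh2 : 2 ≤ a - i + 1 := by omega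
        obtain ⟨G, h1, h2', h3⟩ := grouping' (a - i + 1) B τ
          (fun k hk => ⟨(hτ01 k).1, le_of_lt ((hmemB k).1 hk)⟩)
          (by
            have hc : (2:ℝ) ≤ ((a - i + 1:ℕ):ℝ) := by exact_mod_cast hh2
            rw [hhcast] at hc ⊢
            linarith [hm1])
        refine ⟨G, h1, h2', ?_⟩
        have hprod : ((1:ℝ)/4)^(a - i + 1) ≤ ∏ g, ∑ k ∈ G g, τ k := by
          rw [show ((1/4:ℝ)^(a - i + 1)) = ∏ _g : Fin (a - i + 1), (1/4:ℝ) by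
            rw [prod_const, card_univ, Fintype.card_fin]]
          exact prod_le_prod (fun g _ => by norm_num) (fun g _ => h3 g)
        refine le_trans ?_ hprod
        have e4 : (4:ℝ) ≤ Real.exp 2 := by
          have he1 : (2:ℝ) ≤ Real.exp 1 := by
            linarith [Real.exp_one_gt_d9]
          have he2 : Real.exp 2 = Real.exp 1 * Real.exp 1 := by
            rw [← Real.exp_add]; norm_num
          rw [he2]
          nlinarith [he1]
        have e5 : Real.exp (-2) ≤ (1:ℝ)/4 := by
          rw [Real.exp_neg, inv_eq_one_div]
          exact one_div_le_one_div_of_le (by norm_num) e4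
        have e6 : Real.exp (-(2*((a - i + 1:ℕ):ℝ))) ≤ (1/4:ℝ)^(a - i + 1) := by
          have e7 : Real.exp (-(2*((a - i + 1:ℕ):ℝ))) = (Real.exp (-2))^(a - i + 1) := by
            rw [← Real.exp_nat_mul]; congr 1; push_cast; ring
          rw [e7]
          exact pow_le_pow_left₀ (Real.exp_pos _).le e5 _
        calc Real.exp (-2800) * i / n = Real.exp (-2800) * ((i:ℝ)/n) := by ring
          _ ≤ Real.exp (-2800) * 1 := mul_le_mul_of_nonneg_left hin' (Real.exp_pos _).le
          _ = Real.exp (-2800) := mul_one _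
          _ ≤ Real.exp (-(2*((a - i + 1:ℕ):ℝ))) := Real.exp_le_exp.2 (by linarith [hh801])
          _ ≤ (1/4:ℝ)^(a - i + 1) := e6
    -- selection machinery
    have hGdisj' : ∀ (c : Fin (a - i + 1) → Fin n), (∀ g, c g ∈ G g) → Function.Injective c := by
      intro c hc g g' hgg
      by_contra hne
      exact (Finset.disjoint_left.1 (hGdisj g g' hne)) (hc g) (hgg ▸ hc g')
    have hdisjBc : ∀ (c : Fin (a - i + 1) → Fin n), (∀ g, c g ∈ G g) →
        Disjoint Bᶜ (univ.image c) := by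
      intro c hc
      refine Finset.disjoint_left.2 fun k hk hk2 => ?_
      obtain ⟨g, _, rfl⟩ := mem_image.1 hk2
      exact (mem_compl.1 hk) (hGB g (hc g))
    have himageSub : ∀ c ∈ Fintype.piFinset G,
        (fun j => decide (j ∈ Bᶜ ∪ univ.image c)) ∈ tgt := by
      intro c hc
      have hc' : ∀ g, c g ∈ G g := fun g => Fintype.mem_piFinset.1 hc g
      rw [htgt, mem_filter]
      refine ⟨mem_univ _, ?_⟩
      rw [trues_indicator'' τ, card_union_of_disjoint (hdisjBc c hc'), card_compl]
      simp only [Fintype.card_fin]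
      rw [card_image_of_injective _ (hGdisj' c hc'), card_univ, Fintype.card_fin]
      omega
    have hwbound : ∀ c ∈ Fintype.piFinset G,
        Real.exp (-(2*QS) + -(2*m)) * ∏ g, τ (c g)
          ≤ w τ (fun j => decide (j ∈ Bᶜ ∪ univ.image c)) := by
      intro c hc
      have hc' : ∀ g, c g ∈ G g := fun g => Fintype.mem_piFinset.1 hc g
      have him : univ.image c ⊆ B := fun k hk => by
        obtain ⟨g, _, rfl⟩ := mem_image.1 hk; exact hGB g (hc' g)
      rw [w_indicator']
      have hTc : (Bᶜ ∪ univ.image c)ᶜ = B \ univ.image c := by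
        rw [compl_union, compl_compl, sdiff_eq]
        rfl
      rw [hTc, prod_union (hdisjBc c hc')]
      have himprod : ∏ j ∈ univ.image c, τ j = ∏ g, τ (c g) :=
        prod_image (fun x _ y _ hxy => hGdisj' c hc' hxy)
      rw [himprod]
      have t1 : 0 ≤ ∏ g, τ (c g) := prod_nonneg fun g _ => (hτ01 _).1
      have b2 := prodBsub (univ.image c) him
      calc Real.exp (-(2*QS) + -(2*m)) * ∏ g, τ (c g)
          = (Real.exp (-(2*QS)) * Real.exp (-(2*m))) * ∏ g, τ (c g) := by
            rw [Real.exp_add]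
        _ ≤ ((∏ j ∈ Bᶜ, τ j) * (∏ j ∈ B \ univ.image c, (1 - τ j))) * ∏ g, τ (c g) := by
            refine mul_le_mul_of_nonneg_right ?_ t1
            exact mul_le_mul prodBc b2 (Real.exp_pos _).le
              (le_trans (Real.exp_pos _).le prodBc)
        _ = (∏ j ∈ Bᶜ, τ j) * (∏ g, τ (c g)) * ∏ j ∈ B \ univ.image c, (1 - τ j) := by
            ring
    have hφinjset : ∀ x ∈ Fintype.piFinset G, ∀ y ∈ Fintype.piFinset G,
        ((fun j => decide (j ∈ Bᶜ ∪ univ.image x)) : Fin n → Bool)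
          = (fun j => decide (j ∈ Bᶜ ∪ univ.image y)) → x = y := by
      intro c hc c' hc' heq
      have hcg : ∀ g, c g ∈ G g := fun g => Fintype.mem_piFinset.1 hc g
      have hcg' : ∀ g, c' g ∈ G g := fun g => Fintype.mem_piFinset.1 hc' g
      funext g
      have h1 : c g ∈ Bᶜ ∪ univ.image c :=
        mem_union_right _ (mem_image.2 ⟨g, mem_univ g, rfl⟩)
      have h2 : decide (c g ∈ Bᶜ ∪ univ.image c) = true := decide_eq_true h1
      have h3 : decide (c g ∈ Bᶜ ∪ univ.image c') = true := by
        rw [← congrFun heq (c g)]; exact h2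
      have h4 : c g ∈ Bᶜ ∪ univ.image c' := of_decide_eq_true h3
      rcases mem_union.1 h4 with h5 | h5
      · exact absurd (hGB g (hcg g)) (mem_compl.1 h5)
      · obtain ⟨g', _, hg'⟩ := mem_image.1 h5
        by_cases hgg : g' = g
        · subst hgg
          exact hg'.symm
        · exfalso
          exact Finset.disjoint_left.1 (hGdisj g' g hgg) (hcg' g') (hg' ▸ hcg g)
    have hsumsel : ∑ c ∈ Fintype.piFinset G, ∏ g, τ (c g) = ∏ g, ∑ k ∈ G g, τ k :=
      (Finset.prod_univ_sum G (fun _ k => τ k)).symm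
    calc Real.exp (-6000) * i / n
        ≤ Real.exp (-(2*QS) + -(2*m)) * (Real.exp (-2800) * i / n) := by
          have he : Real.exp (-6000) ≤ Real.exp ((-(2*QS) + -(2*m)) + -2800) :=
            Real.exp_le_exp.2 (by linarith)
          rw [Real.exp_add] at he
          calc Real.exp (-6000) * i / n = Real.exp (-6000) * ((i:ℝ)/n) := by ring
            _ ≤ (Real.exp (-(2*QS) + -(2*m)) * Real.exp (-2800)) * ((i:ℝ)/n) :=
                mul_le_mul_of_nonneg_right he hni0.le
            _ = Real.exp (-(2*QS) + -(2*m)) * (Real.exp (-2800) * i / n) := by ring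
      _ ≤ Real.exp (-(2*QS) + -(2*m)) * ∏ g, ∑ k ∈ G g, τ k :=
          mul_le_mul_of_nonneg_left hX (Real.exp_pos _).le
      _ = ∑ c ∈ Fintype.piFinset G, Real.exp (-(2*QS) + -(2*m)) * ∏ g, τ (c g) := by
          rw [← hsumsel, mul_sum]
      _ ≤ ∑ c ∈ Fintype.piFinset G, w τ (fun j => decide (j ∈ Bᶜ ∪ univ.image c)) :=
          sum_le_sum hwbound
      _ = ∑ x ∈ (Fintype.piFinset G).image
            (fun c => (fun j : Fin n => decide (j ∈ Bᶜ ∪ univ.image c))), w τ x :=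
          (sum_image hφinjset).symm
      _ ≤ ∑ x ∈ tgt, w τ x := by
          refine sum_le_sum_of_subset_of_nonneg ?_ (fun x hx _ => w_nonneg' τ hτ01 x)
          rw [image_subset_iff]
          exact himageSub

end Stmt14

/-- There is a constant `c > 0` such that whenever `i` ones are still missing and the
pheromone sum is at least `v(a_{n-i}) = (n-i)(1-1/n) + i/n`, the probability of
sampling a bit string with at least `n-i+1` ones is at least `c·i/n`. -/
theorem stmt_14 : ∃ c : ℝ, 0 < c ∧
    ∀ (n : ℕ), 2 ≤ n → ∀ (i : ℕ), 1 ≤ i → i ≤ n →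
    ∀ (τ : Fin n → ℝ), (∀ k, 1 / (n : ℝ) ≤ τ k ∧ τ k ≤ 1 - 1 / (n : ℝ)) →
    ((n : ℝ) - (i : ℝ)) * (1 - 1 / (n : ℝ)) + (i : ℝ) / (n : ℝ) ≤ ∑ k, τ k →
    c * (i : ℝ) / (n : ℝ) ≤ prob τ (Finset.univ.filter (fun x : Fin n → Bool =>
      n - i + 1 ≤ (Finset.univ.filter (fun k => x k = true)).card)) := by
  classical
  refine ⟨Real.exp (-6000), Real.exp_pos _, ?_⟩
  intro n hn i hi1 hin τ hτ hsum
  have hn0 : (0:ℝ) < n := by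
    have : 0 < n := by omega
    exact_mod_cast this
  have hτ01 : ∀ k, 0 ≤ τ k ∧ τ k ≤ 1 := fun k =>
    ⟨le_trans (by positivity) (hτ k).1, le_trans (hτ k).2 (by
      have : 0 ≤ 1/(n:ℝ) := by positivity
      linarith)⟩
  have hprob : prob τ (Finset.univ.filter (fun x : Fin n → Bool =>
      n - i + 1 ≤ (Finset.univ.filter (fun k => x k = true)).card))
      = ∑ x ∈ Finset.univ.filter (fun x : Fin n → Bool =>
      n - i + 1 ≤ (Finset.univ.filter (fun k => x k = true)).card), Stmt14.w τ x := rfl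
  rw [hprob]
  have hid : ((n:ℝ) - i) * (1 - 1/n) + i/n = (n:ℝ) - i - 1 + 2*i/n := by
    field_simp
    ring
  have hQ : ∑ k, (1 - τ k) ≤ (i:ℝ) + 1 - 2*i/n := by
    have h3 : (n:ℝ) - i - 1 + 2*i/n ≤ ∑ k, τ k := by
      rw [← hid]; exact hsum
    have h4 : ∑ k : Fin n, (1 - τ k) = (n:ℝ) - ∑ k, τ k := by
      rw [sum_sub_distrib, sum_const, card_univ, Fintype.card_fin, nsmul_eq_mul, mul_one]
    linarith
  have hV0 : 0 ≤ ∑ j, Stmt14.v τ j :=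
    sum_nonneg fun j _ => mul_nonneg (hτ01 j).1 (by linarith [(hτ01 j).2])
  have hV05 : (1:ℝ)/2 ≤ ∑ j, Stmt14.v τ j := by
    have hterm : ∀ k, 1/(2*(n:ℝ)) ≤ Stmt14.v τ k := by
      intro k
      unfold Stmt14.v
      have h1 := (hτ k).1
      have h2 := (hτ k).2
      have hn' : (0:ℝ) < 1/n := by positivity
      rcases le_or_gt (τ k) (1/2) with hc | hc
      · have h3 : (1:ℝ)/n * (1/2) ≤ τ k * (1 - τ k) :=
          mul_le_mul h1 (by linarith) (by norm_num) (by linarith [(hτ01 k).1])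
        calc 1/(2*(n:ℝ)) = 1/n * (1/2) := by ring
          _ ≤ τ k * (1 - τ k) := h3
      · have h4 : (1:ℝ)/n ≤ 1 - τ k := by linarith
        have h3 : (1:ℝ)/2 * (1/n) ≤ τ k * (1 - τ k) :=
          mul_le_mul (by linarith) h4 (by positivity) (by linarith [(hτ01 k).1])
        calc 1/(2*(n:ℝ)) = 1/2 * (1/n) := by ring
          _ ≤ τ k * (1 - τ k) := h3
    have hcs := card_nsmul_le_sum univ (Stmt14.v τ) (1/(2*(n:ℝ))) (fun k _ => hterm k)
    rw [card_univ, Fintype.card_fin, nsmul_eq_mul] at hcs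
    calc (1:ℝ)/2 = (n:ℝ) * (1/(2*(n:ℝ))) := by field_simp
      _ ≤ ∑ j, Stmt14.v τ j := hcs
  have hin' : (i:ℝ)/n ≤ 1 := by
    rw [div_le_one hn0]; exact_mod_cast hin
  rcases le_or_gt (10*(2 - 2*(i:ℝ)/n)) (Real.sqrt (∑ j, Stmt14.v τ j)) with hcase | hcase
  · -- high variance case
    have htb := Stmt14.tail_bound τ hτ01 hV05
    have hsub : univ.filter (fun x => Real.sqrt (∑ j, Stmt14.v τ j) / 10 ≤ Stmt14.Ds τ univ x) ⊆
        univ.filter (fun x : Fin n → Bool =>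
          n - i + 1 ≤ (univ.filter (fun k => x k = true)).card) := by
      intro x hx
      rw [mem_filter] at hx ⊢
      refine ⟨mem_univ _, ?_⟩
      have hDs : Stmt14.Ds τ univ x
          = (∑ j, (if x j then (1:ℝ) else 0)) - ∑ k, τ k := by
        unfold Stmt14.Ds Stmt14.d
        rw [← sum_sub_distrib]
        refine sum_congr rfl fun j _ => ?_
        rcases hxj : x j with _|_ <;> simp [hxj]
      have hO : (∑ j, (if x j then (1:ℝ) else 0))
          = ((univ.filter (fun k => x k = true)).card : ℝ) := by
        rw [sum_ite, sum_const, sum_const_zero, add_zero, nsmul_eq_mul, mul_one]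
      have h1 := hx.2
      rw [hDs, hO] at h1
      have h2 : 2 - 2*(i:ℝ)/n ≤ Real.sqrt (∑ j, Stmt14.v τ j) / 10 := by linarith
      have h3 : (n:ℝ) - i - 1 + 2*i/n ≤ ∑ k, τ k := by
        rw [← hid]; exact hsum
      have hcard : ((n:ℝ) - i + 1) ≤ ((univ.filter (fun k => x k = true)).card : ℝ) := by
        linarith
      have hcast : ((n - i + 1 : ℕ) : ℝ) = (n:ℝ) - i + 1 := by
        push_cast [Nat.cast_sub hin]
        ring
      have : ((n - i + 1 : ℕ) : ℝ) ≤ ((univ.filter (fun k => x k = true)).card : ℝ) := by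
        rw [hcast]; exact hcard
      exact_mod_cast this
    have e2 : Real.exp (-6000) ≤ 1/100 := by
      have h100 : (100:ℝ) ≤ Real.exp 6000 := by
        have := Real.add_one_le_exp (6000:ℝ)
        linarith
      rw [Real.exp_neg, inv_eq_one_div]
      exact le_trans (one_div_le_one_div_of_le (by norm_num) h100) (by norm_num)
    calc Real.exp (-6000) * i / n = Real.exp (-6000) * ((i:ℝ)/n) := by ring
      _ ≤ Real.exp (-6000) * 1 := mul_le_mul_of_nonneg_left hin' (Real.exp_pos _).le
      _ = Real.exp (-6000) := mul_one _
      _ ≤ 1/100 := e2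
      _ ≤ ∑ x ∈ univ.filter
            (fun x => Real.sqrt (∑ j, Stmt14.v τ j) / 10 ≤ Stmt14.Ds τ univ x),
            Stmt14.w τ x := htb
      _ ≤ ∑ x ∈ Finset.univ.filter (fun x : Fin n → Bool =>
            n - i + 1 ≤ (Finset.univ.filter (fun k => x k = true)).card), Stmt14.w τ x :=
          sum_le_sum_of_subset_of_nonneg hsub (fun x _ _ => Stmt14.w_nonneg' τ hτ01 x)
  · -- low variance case
    have he : 2*(i:ℝ)/n = 2*((i:ℝ)/n) := by ring
    rw [he] at hcase
    have hg0 : 0 ≤ 2 - 2*((i:ℝ)/n) := by linarith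
    have hV400 : ∑ j, Stmt14.v τ j ≤ 400 := by
      have hi0 : (0:ℝ) ≤ (i:ℝ)/n := by positivity
      have h1 : Real.sqrt (∑ j, Stmt14.v τ j) < 20 := lt_of_lt_of_le hcase (by linarith)
      have h2 : ∑ j, Stmt14.v τ j = (Real.sqrt (∑ j, Stmt14.v τ j))^2 :=
        (Real.sq_sqrt hV0).symm
      nlinarith [Real.sqrt_nonneg (∑ j, Stmt14.v τ j), h1, h2]
    exact Stmt14.combinatorial τ hn i hi1 hin hτ hQ hV400
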